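/- Let C : Fin d → Fin d → Fin d → ℝ be antisymmetric in its two upper indices. Let A : (Fin d → ℝ) → (Fin d → ℝ) be twice continuously differentiable, E : (Fin d → ℝ) → (Fin d → ℝ) be continuously differentiable, Γ : (Fin d → ℝ) → Matrix (Fin d) (Fin d) ℝ be continuously differentiable, and f : (Fin d → ℝ) → ℝ be continuously differentiable with compact support. Then ∫_{ℝ^d} Σ_{μ,ν} E^μ(x)·(Γ(x)^ν_μ + Σ_{σ,ξ} x_σ·C^{ξν}_σ·∂_ξ A_μ(x))·∂_ν f(x) dx = −∫_{ℝ^d} ( Σ_{μ,ν} ∂_ν( y ↦ Γ(y)^ν_μ·E^μ(y) )(x) + Σ_μ {A_μ, E^μ}(x) + Σ_{μ,ξ} (Σ_ν C^{ξν}_ν)·∂_ξ A_μ(x)·E^μ(x) )·f(x) dx. -/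

import Mathlib

open MeasureTheory

/-- Partial derivative in the `μ`-th coordinate direction. -/
noncomputable def pd {d : ℕ} (μ : Fin d) (g : (Fin d → ℝ) → ℝ) (x : Fin d → ℝ) : ℝ :=
  fderiv ℝ g x (Pi.single μ 1)

/-- The Lie-algebra-type Poisson bracket `{g,h}(x) = Σ x_λ C^{μν}_λ ∂_μ g ∂_ν h`. -/
noncomputable def pb {d : ℕ} (C : Fin d → Fin d → Fin d → ℝ) (g h : (Fin d → ℝ) → ℝ)
    (x : Fin d → ℝ) : ℝ :=
  ∑ lam, ∑ μ, ∑ ν, x lam * C μ ν lam * pd μ g x * pd ν h x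

section helpers

variable {d : ℕ}

lemma pd_contDiff {g : (Fin d → ℝ) → ℝ} (hg : ContDiff ℝ 2 g) (ξ : Fin d) :
    ContDiff ℝ 1 (pd ξ g) :=
  (ContinuousLinearMap.apply ℝ ℝ (Pi.single ξ 1 : Fin d → ℝ)).contDiff.comp
    (hg.fderiv_right (by norm_num))

lemma pd_continuous {g : (Fin d → ℝ) → ℝ} (hg : ContDiff ℝ 1 g) (ν : Fin d) :
    Continuous (pd ν g) :=
  ((ContinuousLinearMap.apply ℝ ℝ (Pi.single ν 1 : Fin d → ℝ)).continuous).comp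
    (hg.continuous_fderiv one_ne_zero)

lemma pd_mul {g h : (Fin d → ℝ) → ℝ} {x : Fin d → ℝ} (hg : DifferentiableAt ℝ g x)
    (hh : DifferentiableAt ℝ h x) (ν : Fin d) :
    pd ν (fun y => g y * h y) x = pd ν g x * h x + g x * pd ν h x := by
  simp [pd, fderiv_fun_mul hg hh]; ring

lemma pd_add {g h : (Fin d → ℝ) → ℝ} {x : Fin d → ℝ} (hg : DifferentiableAt ℝ g x)
    (hh : DifferentiableAt ℝ h x) (ν : Fin d) :
    pd ν (fun y => g y + h y) x = pd ν g x + pd ν h x := by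
  simp [pd, fderiv_fun_add hg hh]

lemma pd_sum {ι : Type*} (s : Finset ι) {g : ι → (Fin d → ℝ) → ℝ} {x : Fin d → ℝ}
    (hg : ∀ i ∈ s, DifferentiableAt ℝ (g i) x) (ν : Fin d) :
    pd ν (fun y => ∑ i ∈ s, g i y) x = ∑ i ∈ s, pd ν (g i) x := by
  simp [pd, fderiv_fun_sum hg]

lemma pd_const (c : ℝ) (ν : Fin d) (x : Fin d → ℝ) : pd ν (fun _ => c) x = 0 := by
  simp [pd]

lemma pd_coord (σ ν : Fin d) (x : Fin d → ℝ) :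
    pd ν (fun y => y σ) x = (Pi.single ν 1 : Fin d → ℝ) σ := by
  have : (fun y : Fin d → ℝ => y σ) = (ContinuousLinearMap.proj σ : (Fin d → ℝ) →L[ℝ] ℝ) := rfl
  simp [pd, this, ContinuousLinearMap.fderiv]

lemma pd_pd_symm {g : (Fin d → ℝ) → ℝ} (hg : ContDiff ℝ 2 g) (ν ξ : Fin d) (x : Fin d → ℝ) :
    pd ν (pd ξ g) x = pd ξ (pd ν g) x := by
  have hdf : Differentiable ℝ (fderiv ℝ g) :=
    (hg.fderiv_right (m := 1) (by norm_num)).differentiable one_ne_zero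
  have key : ∀ v w : Fin d → ℝ,
      fderiv ℝ (fun y => fderiv ℝ g y w) x v = fderiv ℝ (fderiv ℝ g) x v w := by
    intro v w
    rw [fderiv_clm_apply (hdf x) (differentiableAt_const w)]
    simp
  have hsymm : IsSymmSndFDerivAt ℝ g x := hg.contDiffAt.isSymmSndFDerivAt (by norm_num)
  simp only [pd]
  rw [show pd ξ g = fun y => fderiv ℝ g y (Pi.single ξ 1) from rfl,
    show pd ν g = fun y => fderiv ℝ g y (Pi.single ν 1) from rfl, key, key, hsymm.eq]

lemma pd_compactSupport {f : (Fin d → ℝ) → ℝ} (hf : HasCompactSupport f) (ν : Fin d) :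
    HasCompactSupport (pd ν f) :=
  hf.fderiv_apply ℝ (Pi.single ν 1)

lemma ibp {g f : (Fin d → ℝ) → ℝ} (hg : ContDiff ℝ 1 g) (hf : ContDiff ℝ 1 f)
    (hfs : HasCompactSupport f) (ν : Fin d) :
    ∫ x, g x * pd ν f x = - ∫ x, pd ν g x * f x := by
  apply integral_mul_fderiv_eq_neg_fderiv_mul_of_integrable
  · exact ((pd_continuous hg ν).mul hf.continuous).integrable_of_hasCompactSupport
      hfs.mul_left
  · exact (hg.continuous.mul (pd_continuous hf ν)).integrable_of_hasCompactSupport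
      (pd_compactSupport hfs ν).mul_left
  · exact (hg.continuous.mul hf.continuous).integrable_of_hasCompactSupport hfs.mul_left
  · exact fun x _ => hg.differentiable one_ne_zero x
  · exact fun x _ => hf.differentiable one_ne_zero x

lemma contraction_zero {C : Fin d → Fin d → Fin d → ℝ}
    (hC : ∀ μ ν lam, C μ ν lam = - C ν μ lam) {M : Fin d → Fin d → ℝ}
    (hM : ∀ ν ξ, M ν ξ = M ξ ν) (σ : Fin d) :
    ∑ ν, ∑ ξ, C ξ ν σ * M ν ξ = 0 := by
  have h1 : ∀ ν ξ : Fin d, C ξ ν σ * M ν ξ = -(C ν ξ σ * M ξ ν) := by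
    intro ν ξ; rw [hC, hM]; ring
  have h2 : (∑ ν, ∑ ξ, C ξ ν σ * M ν ξ) = -∑ ν, ∑ ξ, C ξ ν σ * M ν ξ := by
    calc (∑ ν, ∑ ξ, C ξ ν σ * M ν ξ) = ∑ ν, ∑ ξ, -(C ν ξ σ * M ξ ν) :=
            Finset.sum_congr rfl fun ν _ => Finset.sum_congr rfl fun ξ _ => h1 ν ξ
      _ = -∑ ν, ∑ ξ, C ν ξ σ * M ξ ν := by
            rw [← Finset.sum_neg_distrib]
            exact Finset.sum_congr rfl fun ν _ => Finset.sum_neg_distrib _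
      _ = -∑ ν, ∑ ξ, C ξ ν σ * M ν ξ := by rw [Finset.sum_comm]
  linarith

/-- The pointwise divergence identity for a single component. -/
lemma key_pointwise {d : ℕ} (C : Fin d → Fin d → Fin d → ℝ)
    (hC : ∀ μ ν lam, C μ ν lam = - C ν μ lam)
    (a e : (Fin d → ℝ) → ℝ) (γ : Fin d → ((Fin d → ℝ) → ℝ))
    (ha : ContDiff ℝ 2 a) (he : ContDiff ℝ 1 e) (hγ : ∀ ν, Differentiable ℝ (γ ν))
    (x : Fin d → ℝ) :
    ∑ ν, pd ν (fun y => e y * (γ ν y + ∑ σ, ∑ ξ, y σ * C ξ ν σ * pd ξ a y)) x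
      = (∑ ν, pd ν (fun y => γ ν y * e y) x) + pb C a e x
        + ∑ ξ, (∑ ν, C ξ ν ν) * pd ξ a x * e x := by
  have he' : Differentiable ℝ e := he.differentiable one_ne_zero
  have hpda : ∀ ξ, Differentiable ℝ (pd ξ a) :=
    fun ξ => (pd_contDiff ha ξ).differentiable one_ne_zero
  have hcoord : ∀ σ : Fin d, Differentiable ℝ (fun y : Fin d → ℝ => y σ) :=
    fun σ => (ContinuousLinearMap.proj σ : (Fin d → ℝ) →L[ℝ] ℝ).differentiable
  have hterm : ∀ ν σ ξ, Differentiable ℝ (fun y : Fin d → ℝ => y σ * C ξ ν σ * pd ξ a y) :=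
    fun ν σ ξ => ((hcoord σ).mul (differentiable_const _)).mul (hpda ξ)
  have hS : ∀ ν, Differentiable ℝ (fun y => ∑ σ : Fin d, ∑ ξ : Fin d, y σ * C ξ ν σ * pd ξ a y) := by
    intro ν
    apply Differentiable.fun_sum; intro σ _
    exact Differentiable.fun_sum fun ξ _ => hterm ν σ ξ
  -- compute pd ν of the inner sum
  have hpdS : ∀ ν, pd ν (fun y => ∑ σ : Fin d, ∑ ξ : Fin d, y σ * C ξ ν σ * pd ξ a y) x
      = ∑ σ : Fin d, ∑ ξ : Fin d,
          ((Pi.single ν 1 : Fin d → ℝ) σ * C ξ ν σ * pd ξ a x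
            + x σ * C ξ ν σ * pd ν (pd ξ a) x) := by
    intro ν
    rw [pd_sum _ (fun σ _ => Differentiable.differentiableAt
      (Differentiable.fun_sum fun ξ _ => hterm ν σ ξ)) ν]
    refine Finset.sum_congr rfl fun σ _ => ?_
    rw [pd_sum _ (fun ξ _ => (hterm ν σ ξ).differentiableAt) ν]
    refine Finset.sum_congr rfl fun ξ _ => ?_
    rw [pd_mul (((hcoord σ).fun_mul (differentiable_const _)).differentiableAt)
      ((hpda ξ).differentiableAt) ν,
      pd_mul ((hcoord σ).differentiableAt) (differentiableAt_const _) ν,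
      pd_const, pd_coord]
    ring
  -- expand pd ν of each product
  have hsplit : ∀ ν,
      pd ν (fun y => e y * (γ ν y + ∑ σ, ∑ ξ, y σ * C ξ ν σ * pd ξ a y)) x
      = pd ν (fun y => γ ν y * e y) x
        + pd ν e x * (∑ σ : Fin d, ∑ ξ : Fin d, x σ * C ξ ν σ * pd ξ a x)
        + e x * pd ν (fun y => ∑ σ : Fin d, ∑ ξ : Fin d, y σ * C ξ ν σ * pd ξ a y) x := by
    intro ν
    have hre : (fun y => e y * (γ ν y + ∑ σ, ∑ ξ, y σ * C ξ ν σ * pd ξ a y))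
        = fun y => e y * γ ν y + e y * (∑ σ, ∑ ξ, y σ * C ξ ν σ * pd ξ a y) := by
      funext y; ring
    rw [hre, pd_add ((he'.fun_mul (hγ ν)).differentiableAt)
      ((he'.fun_mul (hS ν)).differentiableAt) ν,
      pd_mul (he'.differentiableAt) ((hγ ν).differentiableAt) ν,
      pd_mul (he'.differentiableAt) ((hS ν).differentiableAt) ν,
      pd_mul ((hγ ν).differentiableAt) (he'.differentiableAt) ν]
    ring
  calc ∑ ν, pd ν (fun y => e y * (γ ν y + ∑ σ, ∑ ξ, y σ * C ξ ν σ * pd ξ a y)) x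
      = ∑ ν, (pd ν (fun y => γ ν y * e y) x
          + pd ν e x * (∑ σ : Fin d, ∑ ξ : Fin d, x σ * C ξ ν σ * pd ξ a x)
          + e x * pd ν (fun y => ∑ σ : Fin d, ∑ ξ : Fin d, y σ * C ξ ν σ * pd ξ a y) x) :=
        Finset.sum_congr rfl fun ν _ => hsplit ν
    _ = (∑ ν, pd ν (fun y => γ ν y * e y) x)
        + (∑ ν, pd ν e x * (∑ σ : Fin d, ∑ ξ : Fin d, x σ * C ξ ν σ * pd ξ a x))
        + ∑ ν, e x * pd ν (fun y => ∑ σ : Fin d, ∑ ξ : Fin d, y σ * C ξ ν σ * pd ξ a y) x := by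
        rw [Finset.sum_add_distrib, Finset.sum_add_distrib]
    _ = (∑ ν, pd ν (fun y => γ ν y * e y) x) + pb C a e x
        + ∑ ξ, (∑ ν, C ξ ν ν) * pd ξ a x * e x := by
        congr 1
        · congr 1
          -- T1 : `pb`
          unfold pb
          calc ∑ ν, pd ν e x * (∑ σ : Fin d, ∑ ξ : Fin d, x σ * C ξ ν σ * pd ξ a x)
              = ∑ ν, ∑ σ : Fin d, ∑ ξ : Fin d,
                  pd ν e x * (x σ * C ξ ν σ * pd ξ a x) := by
                refine Finset.sum_congr rfl fun ν _ => ?_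
                rw [Finset.mul_sum]
                exact Finset.sum_congr rfl fun σ _ => Finset.mul_sum ..
            _ = ∑ σ : Fin d, ∑ ν, ∑ ξ : Fin d,
                  pd ν e x * (x σ * C ξ ν σ * pd ξ a x) := Finset.sum_comm
            _ = ∑ σ : Fin d, ∑ ξ : Fin d, ∑ ν,
                  pd ν e x * (x σ * C ξ ν σ * pd ξ a x) :=
                Finset.sum_congr rfl fun σ _ => Finset.sum_comm
            _ = ∑ lam, ∑ μ, ∑ ν, x lam * C μ ν lam * pd μ a x * pd ν e x := by
                refine Finset.sum_congr rfl fun σ _ => Finset.sum_congr rfl fun ξ _ =>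
                  Finset.sum_congr rfl fun ν _ => ?_
                ring
        · -- T2 + T3
          calc ∑ ν, e x * pd ν (fun y => ∑ σ : Fin d, ∑ ξ : Fin d, y σ * C ξ ν σ * pd ξ a y) x
              = ∑ ν, e x * (∑ σ : Fin d, ∑ ξ : Fin d,
                  ((Pi.single ν 1 : Fin d → ℝ) σ * C ξ ν σ * pd ξ a x
                    + x σ * C ξ ν σ * pd ν (pd ξ a) x)) :=
                Finset.sum_congr rfl fun ν _ => by rw [hpdS ν]
            _ = (∑ ν, ∑ σ : Fin d, ∑ ξ : Fin d,
                  e x * ((Pi.single ν 1 : Fin d → ℝ) σ * C ξ ν σ * pd ξ a x))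
                + ∑ ν, ∑ σ : Fin d, ∑ ξ : Fin d,
                  e x * (x σ * C ξ ν σ * pd ν (pd ξ a) x) := by
                rw [← Finset.sum_add_distrib]
                refine Finset.sum_congr rfl fun ν _ => ?_
                rw [← Finset.sum_add_distrib, Finset.mul_sum]
                refine Finset.sum_congr rfl fun σ _ => ?_
                rw [← Finset.sum_add_distrib, Finset.mul_sum]
                exact Finset.sum_congr rfl fun ξ _ => by ring
            _ = ∑ ξ, (∑ ν, C ξ ν ν) * pd ξ a x * e x := by
                have hT3 : (∑ ν, ∑ σ : Fin d, ∑ ξ : Fin d,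
                    e x * (x σ * C ξ ν σ * pd ν (pd ξ a) x)) = 0 := by
                  rw [Finset.sum_comm]
                  refine Finset.sum_eq_zero fun σ _ => ?_
                  have h0 : ∑ ν, ∑ ξ, C ξ ν σ * pd ν (pd ξ a) x = 0 :=
                    contraction_zero hC (fun ν ξ => pd_pd_symm ha ν ξ x) σ
                  calc ∑ ν, ∑ ξ : Fin d, e x * (x σ * C ξ ν σ * pd ν (pd ξ a) x)
                      = ∑ ν, ∑ ξ : Fin d, (e x * x σ) * (C ξ ν σ * pd ν (pd ξ a) x) :=
                        Finset.sum_congr rfl fun ν _ => Finset.sum_congr rfl fun ξ _ => by ring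
                    _ = (e x * x σ) * ∑ ν, ∑ ξ : Fin d, C ξ ν σ * pd ν (pd ξ a) x := by
                        rw [Finset.mul_sum]
                        exact Finset.sum_congr rfl fun ν _ => (Finset.mul_sum ..).symm
                    _ = 0 := by rw [h0, mul_zero]
                have hT2 : (∑ ν, ∑ σ : Fin d, ∑ ξ : Fin d,
                    e x * ((Pi.single ν 1 : Fin d → ℝ) σ * C ξ ν σ * pd ξ a x))
                    = ∑ ξ, (∑ ν, C ξ ν ν) * pd ξ a x * e x := by
                  have : ∀ ν : Fin d, (∑ σ : Fin d, ∑ ξ : Fin d,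
                      e x * ((Pi.single ν 1 : Fin d → ℝ) σ * C ξ ν σ * pd ξ a x))
                      = ∑ ξ : Fin d, e x * (C ξ ν ν * pd ξ a x) := by
                    intro ν
                    rw [Finset.sum_comm]
                    refine Finset.sum_congr rfl fun ξ _ => ?_
                    simp [Pi.single_apply, mul_ite, ite_mul, Finset.sum_ite_eq']
                  rw [Finset.sum_congr rfl fun ν _ => this ν, Finset.sum_comm]
                  refine Finset.sum_congr rfl fun ξ _ => ?_
                  rw [Finset.sum_mul, Finset.sum_mul]
                  exact Finset.sum_congr rfl fun ν _ => by ring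
                rw [hT3, hT2, add_zero]

end helpers

/-- Integration by parts identity behind the Noether identity of Lie-Poisson
electrodynamics (Eq. (ipropo) of the paper). -/
theorem noether_integration_by_parts {d : ℕ} (C : Fin d → Fin d → Fin d → ℝ)
    (hC : ∀ μ ν lam, C μ ν lam = - C ν μ lam)
    (A : (Fin d → ℝ) → (Fin d → ℝ)) (E : (Fin d → ℝ) → (Fin d → ℝ))
    (Γ : (Fin d → ℝ) → Matrix (Fin d) (Fin d) ℝ) (f : (Fin d → ℝ) → ℝ)
    (hA : ContDiff ℝ 2 A) (hE : ContDiff ℝ 1 E)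
    (hΓ : ∀ i j, ContDiff ℝ 1 (fun y => Γ y i j))
    (hf : ContDiff ℝ 1 f) (hfsupp : HasCompactSupport f) :
    ∫ x : Fin d → ℝ,
        ∑ μ, ∑ ν, E x μ * (Γ x ν μ + ∑ σ, ∑ ξ, x σ * C ξ ν σ * pd ξ (fun y => A y μ) x)
          * pd ν f x
      = - ∫ x : Fin d → ℝ,
          ((∑ μ, ∑ ν, pd ν (fun y => Γ y ν μ * E y μ) x)
            + (∑ μ, pb C (fun y => A y μ) (fun y => E y μ) x)
            + ∑ μ, ∑ ξ, (∑ ν, C ξ ν ν) * pd ξ (fun y => A y μ) x * E x μ) * f x := by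
  have hA2 : ∀ μ, ContDiff ℝ 2 (fun y => A y μ) := fun μ => contDiff_pi.1 hA μ
  have hE1 : ∀ μ, ContDiff ℝ 1 (fun y => E y μ) := fun μ => contDiff_pi.1 hE μ
  have hcoord : ∀ σ : Fin d, ContDiff ℝ 1 (fun y : Fin d → ℝ => y σ) :=
    fun σ => (ContinuousLinearMap.proj σ : (Fin d → ℝ) →L[ℝ] ℝ).contDiff
  have hG : ∀ μ ν, ContDiff ℝ 1 (fun x => E x μ *
      (Γ x ν μ + ∑ σ, ∑ ξ, x σ * C ξ ν σ * pd ξ (fun y => A y μ) x)) := by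
    intro μ ν
    refine (hE1 μ).mul ((hΓ ν μ).add ?_)
    refine ContDiff.sum fun σ _ => ContDiff.sum fun ξ _ => ?_
    exact ((hcoord σ).mul contDiff_const).mul (pd_contDiff (hA2 μ) ξ)
  have hint1 : ∀ μ ν, Integrable (fun x : Fin d → ℝ => (E x μ *
      (Γ x ν μ + ∑ σ, ∑ ξ, x σ * C ξ ν σ * pd ξ (fun y => A y μ) x)) * pd ν f x) :=
    fun μ ν => ((hG μ ν).continuous.mul (pd_continuous hf ν)).integrable_of_hasCompactSupport
      (pd_compactSupport hfsupp ν).mul_left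
  have hint2 : ∀ μ ν, Integrable (fun x : Fin d → ℝ => pd ν (fun y => E y μ *
      (Γ y ν μ + ∑ σ, ∑ ξ, y σ * C ξ ν σ * pd ξ (fun z => A z μ) y)) x * f x) :=
    fun μ ν => ((pd_continuous (hG μ ν) ν).mul hf.continuous).integrable_of_hasCompactSupport
      hfsupp.mul_left
  calc ∫ x : Fin d → ℝ,
        ∑ μ, ∑ ν, E x μ * (Γ x ν μ + ∑ σ, ∑ ξ, x σ * C ξ ν σ * pd ξ (fun y => A y μ) x)
          * pd ν f x
      = ∑ μ, ∑ ν, ∫ x : Fin d → ℝ, (E x μ *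
          (Γ x ν μ + ∑ σ, ∑ ξ, x σ * C ξ ν σ * pd ξ (fun y => A y μ) x)) * pd ν f x := by
        rw [integral_finset_sum _ (fun μ _ => integrable_finset_sum _ fun ν _ => hint1 μ ν)]
        exact Finset.sum_congr rfl fun μ _ => integral_finset_sum _ fun ν _ => hint1 μ ν
    _ = ∑ μ, ∑ ν, - ∫ x : Fin d → ℝ, pd ν (fun y => E y μ *
          (Γ y ν μ + ∑ σ, ∑ ξ, y σ * C ξ ν σ * pd ξ (fun z => A z μ) y)) x * f x :=
        Finset.sum_congr rfl fun μ _ => Finset.sum_congr rfl fun ν _ =>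
          ibp (hG μ ν) hf hfsupp ν
    _ = - ∑ μ, ∑ ν, ∫ x : Fin d → ℝ, pd ν (fun y => E y μ *
          (Γ y ν μ + ∑ σ, ∑ ξ, y σ * C ξ ν σ * pd ξ (fun z => A z μ) y)) x * f x := by
        rw [← Finset.sum_neg_distrib]
        exact Finset.sum_congr rfl fun μ _ => Finset.sum_neg_distrib _
    _ = - ∫ x : Fin d → ℝ, (∑ μ, ∑ ν, pd ν (fun y => E y μ *
          (Γ y ν μ + ∑ σ, ∑ ξ, y σ * C ξ ν σ * pd ξ (fun z => A z μ) y)) x) * f x := by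
        congr 1
        calc ∑ μ, ∑ ν, ∫ x : Fin d → ℝ, pd ν (fun y => E y μ *
              (Γ y ν μ + ∑ σ, ∑ ξ, y σ * C ξ ν σ * pd ξ (fun z => A z μ) y)) x * f x
            = ∑ μ, ∫ x : Fin d → ℝ, ∑ ν, pd ν (fun y => E y μ *
              (Γ y ν μ + ∑ σ, ∑ ξ, y σ * C ξ ν σ * pd ξ (fun z => A z μ) y)) x * f x :=
              Finset.sum_congr rfl fun μ _ =>
                (integral_finset_sum _ fun ν _ => hint2 μ ν).symm
          _ = ∫ x : Fin d → ℝ, ∑ μ, ∑ ν, pd ν (fun y => E y μ *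
              (Γ y ν μ + ∑ σ, ∑ ξ, y σ * C ξ ν σ * pd ξ (fun z => A z μ) y)) x * f x :=
              (integral_finset_sum _ fun μ _ =>
                integrable_finset_sum _ fun ν _ => hint2 μ ν).symm
          _ = ∫ x : Fin d → ℝ, (∑ μ, ∑ ν, pd ν (fun y => E y μ *
              (Γ y ν μ + ∑ σ, ∑ ξ, y σ * C ξ ν σ * pd ξ (fun z => A z μ) y)) x) * f x := by
              refine integral_congr_ae (Filter.Eventually.of_forall fun x => ?_)
              simp only [Finset.sum_mul]
    _ = - ∫ x : Fin d → ℝ,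
          ((∑ μ, ∑ ν, pd ν (fun y => Γ y ν μ * E y μ) x)
            + (∑ μ, pb C (fun y => A y μ) (fun y => E y μ) x)
            + ∑ μ, ∑ ξ, (∑ ν, C ξ ν ν) * pd ξ (fun y => A y μ) x * E x μ) * f x := by
        congr 1
        apply integral_congr_ae
        filter_upwards with x
        congr 1
        rw [← Finset.sum_add_distrib, ← Finset.sum_add_distrib]
        exact Finset.sum_congr rfl fun μ _ =>
          key_pointwise C hC (fun y => A y μ) (fun y => E y μ) (fun ν y => Γ y ν μ)
            (hA2 μ) (hE1 μ) (fun ν => (hΓ ν μ).differentiable one_ne_zero) x
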